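/- Let n ≥ 3 and let H be a subgroup of the multiplicative group (ℤ/2^nℤ)^* of units of ℤ/2^nℤ. Then one of the following holds: (i) H is cyclic, and if |H| = 2^a then 0 ≤ a ≤ n−2 and H is generated by the residue class of 1+2^{n−a}, or by the residue class of −1+2^{n−a}, or H is generated by −1 (in which case a ≤ 1); (ii) there exists a with 1 ≤ a ≤ n−2 such that H is generated by the two elements −1 and 1+2^{n−a}, the element −1 does not lie in the cyclic subgroup generated by 1+2^{n−a}, and |H| = 2^{a+1}. -/

import Mathlib

open Subgroup

private lemma int_key (m j : ℕ) (t : ℤ) (ht : Odd t) :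
    ∃ s : ℤ, Odd s ∧ (1 + 2 ^ (m + 2) * t) ^ 2 ^ j = 1 + 2 ^ (m + 2 + j) * s := by
  induction j with
  | zero => exact ⟨t, ht, by ring⟩
  | succ j ih =>
    obtain ⟨s, hs, heq⟩ := ih
    refine ⟨s + 2 ^ (m + 1 + j) * s ^ 2,
      hs.add_even ((Int.even_pow.mpr ⟨even_two, by omega⟩).mul_right _), ?_⟩
    rw [show (2:ℕ) ^ (j+1) = 2 ^ j * 2 from pow_succ 2 j, pow_mul, heq]; ring

private lemma two_pow_zero {n : ℕ} {k : ℕ} (hk : n ≤ k) : ((2:ZMod (2^n)))^k = 0 := by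
  have : ((2^k : ℕ) : ZMod (2^n)) = 0 :=
    (ZMod.natCast_eq_zero_iff _ _).mpr (pow_dvd_pow 2 hk)
  push_cast at this; exact this

private lemma mod4_pow {k : ℕ} (hk : 2 ≤ k) : ((2 : ZMod 4))^k = 0 := by
  obtain ⟨m, rfl⟩ : ∃ m, k = 2 + m := ⟨k-2, by omega⟩
  rw [pow_add, show ((2:ZMod 4))^2 = 0 by decide, zero_mul]

private lemma exists_unit {n : ℕ} (hn : 3 ≤ n) {k : ℕ} (hk : 2 ≤ k) (t : ℤ) (ht : Odd t) :
    ∃ u : (ZMod (2^n))ˣ, (u : ZMod (2^n)) = ((1 + 2^k * t : ℤ) : ZMod (2^n)) ∧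
      orderOf u = 2^(n-k) := by
  obtain ⟨m, rfl⟩ : ∃ m, k = m + 2 := ⟨k - 2, by omega⟩
  set x : ZMod (2^n) := ((1 + 2^(m+2) * t : ℤ) : ZMod (2^n)) with hx
  have hpow : ∀ j : ℕ, n ≤ m + 2 + j → x ^ 2^j = 1 := by
    intro j hj
    obtain ⟨s, hs, heq⟩ := int_key m j t ht
    rw [hx, ← Int.cast_pow, heq]
    push_cast
    rw [two_pow_zero hj]
    ring
  have hne : ∀ j : ℕ, m + 2 + j = n - 1 → x ^ 2^j ≠ 1 := by
    intro j hj hcontra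
    obtain ⟨s, hs, heq⟩ := int_key m j t ht
    rw [hx, ← Int.cast_pow, heq] at hcontra
    have h0 : ((2^(m+2+j) * s : ℤ) : ZMod (2^n)) = 0 := by
      push_cast at hcontra ⊢
      linear_combination hcontra
    rw [ZMod.intCast_zmod_eq_zero_iff_dvd] at h0
    push_cast at h0
    rw [show n = (m+2+j) + 1 by omega, pow_succ] at h0
    have h2 : (2:ℤ) ∣ s := (mul_dvd_mul_iff_left (a := (2:ℤ)^(m+2+j))
      (pow_ne_zero _ two_ne_zero)).mp h0
    exact (Int.not_even_iff_odd.mpr hs) (even_iff_two_dvd.mpr h2)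
  have hx1 : x ^ 2^(n - (m+2)) = 1 := hpow _ (by omega)
  have hu : IsUnit x := IsUnit.of_pow_eq_one hx1 (by positivity)
  refine ⟨hu.unit, hu.unit_spec, ?_⟩
  rw [← orderOf_units, hu.unit_spec]
  by_cases hc : n ≤ m + 2
  · rw [show n - (m+2) = 0 by omega, pow_zero, orderOf_eq_one_iff]
    have := hpow 0 (by omega)
    rwa [pow_zero, pow_one] at this
  · obtain ⟨d, hd⟩ : ∃ d, n - (m+2) = d + 1 := ⟨n - (m+2) - 1, by omega⟩
    rw [hd]
    exact orderOf_eq_prime_pow (hne d (by omega)) (by rw [← hd]; exact hx1)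

private lemma uniq {n : ℕ} (hn : 3 ≤ n) {c : (ZMod (2^n))ˣ} (hc : orderOf c = 2^(n-2))
    {K : Subgroup (ZMod (2^n))ˣ} (hK : K ≤ zpowers c) {a : ℕ} (ha : a ≤ n-2)
    (hcard : Nat.card K = 2^a) : K = zpowers (c ^ (2^(n-2-a) : ℕ)) := by
  have horder : orderOf (c ^ (2^(n-2-a) : ℕ)) = 2^a := by
    rw [orderOf_pow, hc, Nat.gcd_eq_right (pow_dvd_pow 2 (by omega)),
      Nat.pow_div (by omega) (by norm_num)]
    congr 1; omega
  have hle : K ≤ zpowers (c ^ (2^(n-2-a) : ℕ)) := by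
    intro x hx
    obtain ⟨s, hs⟩ := mem_zpowers_iff.mp (hK hx)
    have hxo : x ^ (2^a : ℕ) = 1 := by
      have h1 : (⟨x, hx⟩ : K) ^ (Nat.card K) = 1 := pow_card_eq_one'
      rw [hcard] at h1
      exact_mod_cast congrArg (Subgroup.subtype K) h1
    have hz : c ^ (s * (2^a : ℤ)) = 1 := by
      rw [zpow_mul, hs, show ((2:ℤ)^a) = ((2^a : ℕ) : ℤ) by push_cast; ring,
        zpow_natCast, hxo]
    have h2 := orderOf_dvd_iff_zpow_eq_one.mpr hz
    rw [hc] at h2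
    push_cast at h2
    have he : (2:ℤ)^(n-2) = 2^(n-2-a) * 2^a := by rw [← pow_add]; congr 1; omega
    rw [he] at h2
    obtain ⟨r, hr⟩ := (mul_dvd_mul_iff_right (pow_ne_zero a (two_ne_zero' ℤ))).mp h2
    refine mem_zpowers_iff.mpr ⟨r, ?_⟩
    rw [← hs, hr, ← zpow_natCast c, ← zpow_mul]
    push_cast
    ring_nf
  exact Subgroup.eq_of_le_of_card_ge hle (by rw [Nat.card_zpowers, horder, hcard])

private lemma isCyclic_zpowers {G : Type*} [Group G] (g : G) : IsCyclic (zpowers g) := by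
  refine ⟨⟨⟨g, mem_zpowers g⟩, ?_⟩⟩
  rintro ⟨y, hy⟩
  obtain ⟨k, hk⟩ := mem_zpowers_iff.mp hy
  exact mem_zpowers_iff.mpr ⟨k, Subtype.ext (by simp [hk])⟩

theorem subgroups_of_units_zmod_two_pow
    (n : ℕ) (hn : 3 ≤ n) (H : Subgroup (ZMod (2 ^ n))ˣ) :
    (IsCyclic H ∧
      ∀ a : ℕ, Nat.card H = 2 ^ a →
        a ≤ n - 2 ∧
          ((∃ u : (ZMod (2 ^ n))ˣ, (u : ZMod (2 ^ n)) = 1 + 2 ^ (n - a) ∧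
              H = Subgroup.zpowers u) ∨
           (∃ u : (ZMod (2 ^ n))ˣ, (u : ZMod (2 ^ n)) = -1 + 2 ^ (n - a) ∧
              H = Subgroup.zpowers u) ∨
           (H = Subgroup.zpowers (-1 : (ZMod (2 ^ n))ˣ) ∧ a ≤ 1))) ∨
    (∃ a : ℕ, 1 ≤ a ∧ a ≤ n - 2 ∧
      ∃ u : (ZMod (2 ^ n))ˣ, (u : ZMod (2 ^ n)) = 1 + 2 ^ (n - a) ∧
        H = Subgroup.closure {(-1 : (ZMod (2 ^ n))ˣ), u} ∧
        (-1 : (ZMod (2 ^ n))ˣ) ∉ Subgroup.zpowers u ∧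
        Nat.card H = 2 ^ (a + 1)) := by
  haveI : NeZero (2^n) := ⟨pow_ne_zero n two_ne_zero⟩
  have h8 : (8:ℕ) ≤ 2^n := by
    calc (8:ℕ) = 2^3 := by norm_num
    _ ≤ 2^n := Nat.pow_le_pow_right (by norm_num) hn
  haveI : Fact (2 < 2^n) := ⟨by omega⟩
  -- cardinality of the unit group
  have hcardG : Nat.card (ZMod (2^n))ˣ = 2^(n-1) := by
    rw [Nat.card_eq_fintype_card, ZMod.card_units_eq_totient,
      Nat.totient_prime_pow Nat.prime_two (by omega)]
    norm_num
  have h4 : (4:ℕ) ∣ 2^n := by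
    have h42 : (4:ℕ) = 2^2 := rfl
    exact h42 ▸ pow_dvd_pow 2 (by omega)
  set f : (ZMod (2^n))ˣ →* (ZMod 4)ˣ :=
    Units.map (ZMod.castHom h4 (ZMod 4)).toMonoidHom with hf
  have hCelts : ∀ y : (ZMod 4)ˣ, y = 1 ∨ y = -1 := by decide
  have hCcard : Nat.card (ZMod 4)ˣ = 2 := by
    rw [Nat.card_eq_fintype_card]; decide
  have hfneg : f (-1) = -1 := by ext; simp [hf]
  have hfsurj : Function.Surjective f := by
    intro y
    rcases hCelts y with rfl | rfl
    · exact ⟨1, map_one f⟩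
    · exact ⟨-1, hfneg⟩
  have hcardker : Nat.card (MonoidHom.ker f) = 2^(n-2) := by
    have h1 := Subgroup.card_eq_card_quotient_mul_card_subgroup (MonoidHom.ker f)
    have h2 : Nat.card ((ZMod (2^n))ˣ ⧸ MonoidHom.ker f) = 2 := by
      rw [Nat.card_congr (QuotientGroup.quotientKerEquivOfSurjective f hfsurj).toEquiv, hCcard]
    rw [hcardG, h2] at h1
    have h3 : (2:ℕ)^(n-1) = 2 * 2^(n-2) := by
      rw [← pow_succ']; congr 1; omega
    omega
  -- the value of f on integer-valued units
  have hfval : ∀ (u : (ZMod (2^n))ˣ) (v : ℤ), (u : ZMod (2^n)) = (v : ZMod (2^n)) →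
      (f u : ZMod 4) = (v : ZMod 4) := by
    intro u v hv
    rw [hf]
    show ((ZMod.castHom h4 (ZMod 4)).toMonoidHom (u : ZMod (2^n)) : ZMod 4) = _
    rw [hv]
    exact map_intCast (ZMod.castHom h4 (ZMod 4)) v
  -- integer-valued units in the kernel
  have hintker : ∀ (u : (ZMod (2^n))ˣ) (v : ℤ), (u : ZMod (2^n)) = (v : ZMod (2^n)) →
      (v : ZMod 4) = 1 → u ∈ MonoidHom.ker f := by
    intro u v hv hv4
    rw [MonoidHom.mem_ker]
    ext
    rw [hfval u v hv, hv4, Units.val_one]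
  -- the generator c of the kernel
  obtain ⟨c, hcv, hc⟩ := exists_unit hn (le_refl 2) 1 odd_one
  have hcmem : c ∈ MonoidHom.ker f := by
    apply hintker c (1 + 2^2 * 1) hcv
    decide
  have hUeq : MonoidHom.ker f = zpowers c :=
    (Subgroup.eq_of_le_of_card_ge (zpowers_le.mpr hcmem)
      (by rw [hcardker, Nat.card_zpowers, hc])).symm
  have hneg1ker : (-1 : (ZMod (2^n))ˣ) ∉ MonoidHom.ker f := by
    rw [MonoidHom.mem_ker, hfneg]
    decide
  have hmemneg : ∀ x : (ZMod (2^n))ˣ, x ∉ MonoidHom.ker f → -x ∈ MonoidHom.ker f := by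
    intro x hx
    rw [MonoidHom.mem_ker] at hx ⊢
    have hfx : f x = -1 := (hCelts (f x)).resolve_left hx
    rw [show -x = -1 * x by rw [neg_one_mul], map_mul, hfneg, hfx]
    simp
  -- the doubling counting lemma
  have hdouble : ∀ (h₀ : (ZMod (2^n))ˣ), h₀ ∈ H → h₀ ∉ MonoidHom.ker f →
      Nat.card H = 2 * Nat.card ↥(H ⊓ MonoidHom.ker f) := by
    intro h₀ hh₀ hh₀'
    set φ := f.comp H.subtype with hφ
    have hkerφ : MonoidHom.ker φ = (MonoidHom.ker f).subgroupOf H := by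
      rw [← Subgroup.comap_subtype]
      exact (MonoidHom.comap_ker f H.subtype).symm
    have hkcard : Nat.card (MonoidHom.ker φ) = Nat.card ↥(H ⊓ MonoidHom.ker f) := by
      rw [hkerφ, ← Subgroup.inf_subgroupOf_left]
      exact Nat.card_congr (Subgroup.subgroupOfEquivOfLe inf_le_left).toEquiv
    have hrange : Nat.card (MonoidHom.range φ) = 2 := by
      have hdvd : Nat.card (MonoidHom.range φ) ∣ 2 := by
        have := Subgroup.card_subgroup_dvd_card (MonoidHom.range φ)
        rwa [hCcard] at this
      rcases (Nat.prime_two.eq_one_or_self_of_dvd _ hdvd) with h | h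
      · exfalso
        rw [Subgroup.card_eq_one] at h
        have hm : φ ⟨h₀, hh₀⟩ ∈ MonoidHom.range φ := ⟨_, rfl⟩
        rw [h, Subgroup.mem_bot] at hm
        exact hh₀' (by simpa [hφ, MonoidHom.mem_ker] using hm)
      · exact h
    have h1 := Subgroup.card_eq_card_quotient_mul_card_subgroup (MonoidHom.ker φ)
    rw [Nat.card_congr (QuotientGroup.quotientKerEquivRange φ).toEquiv, hrange, hkcard] at h1
    exact h1
  -- the master uniqueness lemma
  have guniq : ∀ (K' : Subgroup (ZMod (2^n))ˣ), K' ≤ MonoidHom.ker f →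
      ∀ a : ℕ, a ≤ n-2 → Nat.card K' = 2^a →
      ∀ (u : (ZMod (2^n))ˣ), u ∈ MonoidHom.ker f → orderOf u = 2^a →
      K' = zpowers u := by
    intro K' hK' a ha hKa u hu hou
    rw [hUeq] at hK' hu
    rw [uniq hn hc hK' ha hKa, ← uniq hn hc (zpowers_le.mpr hu) ha
      (by rw [Nat.card_zpowers, hou])]
  -- elements of order-2 cyclic groups
  have mem_order_two : ∀ (z v : (ZMod (2^n))ˣ), orderOf z = 2 → v ∈ zpowers z →
      v = 1 ∨ v = z := by
    intro z v hz hv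
    obtain ⟨k, hk⟩ := mem_zpowers_iff.mp hv
    have hzz : z * z = 1 := by
      have := pow_orderOf_eq_one z; rwa [hz, pow_two] at this
    have hz2 : z^(2:ℤ) = 1 := by rw [zpow_two]; exact hzz
    rcases Int.even_or_odd k with ⟨r, hr⟩ | ⟨r, hr⟩
    · left; rw [← hk, hr, show r + r = 2*r by ring, zpow_mul, hz2, one_zpow]
    · right; rw [← hk, hr, zpow_add, zpow_mul, hz2, one_zpow, one_mul, zpow_one]
  -- the canonical subgroup K
  set K := H ⊓ MonoidHom.ker f with hK
  have hKle : K ≤ MonoidHom.ker f := inf_le_right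
  have hKcard_dvd : Nat.card K ∣ 2^(n-2) := by
    rw [← hcardker]
    exact Subgroup.card_dvd_of_le hKle
  obtain ⟨a, ha, hKcard⟩ := (Nat.dvd_prime_pow Nat.prime_two).mp hKcard_dvd
  -- the generator g of K
  obtain ⟨g, hgv, hgo⟩ := exists_unit hn (k := n - a) (by omega) 1 odd_one
  have hgo' : orderOf g = 2^a := by rw [hgo]; congr 1; omega
  have hgker : g ∈ MonoidHom.ker f := by
    apply hintker g _ hgv
    push_cast
    rw [mod4_pow (by omega)]
    ring
  have hKeq : K = zpowers g := guniq K hKle a ha hKcard g hgker hgo'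
  have hgH : g ∈ H := by
    have : g ∈ K := hKeq ▸ mem_zpowers g
    exact (inf_le_left : K ≤ H) this
  have hgval : (g : ZMod (2^n)) = 1 + 2^(n-a) := by
    rw [hgv]; push_cast; ring
  have hpowinj : ∀ {x y : ℕ}, (2:ℕ)^x = 2^y → x = y :=
    fun h => Nat.pow_right_injective (le_refl 2) h
  by_cases hneg1 : (-1 : (ZMod (2^n))ˣ) ∈ H
  · -- Case A : -1 ∈ H
    have hcardH : Nat.card H = 2 * 2^a := by
      rw [hdouble (-1) hneg1 hneg1ker, hKcard]
    by_cases ha0 : a = 0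
    · -- H = zpowers (-1)
      subst ha0
      have hcardH2 : Nat.card H = 2 := by rw [hcardH]; norm_num
      have hone : orderOf (-1 : (ZMod (2^n))ˣ) = 2 := by
        apply orderOf_eq_prime
        · rw [pow_two]; simp
        · intro hcontr
          have hval : ((-1 : (ZMod (2^n))ˣ) : ZMod (2^n)) = 1 := by
            rw [hcontr, Units.val_one]
          rw [Units.val_neg, Units.val_one] at hval
          exact ZMod.neg_one_ne_one hval
      have hHeq : H = zpowers (-1 : (ZMod (2^n))ˣ) :=
        (Subgroup.eq_of_le_of_card_ge (zpowers_le.mpr hneg1)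
          (by rw [Nat.card_zpowers, hone, hcardH2])).symm
      refine Or.inl ⟨by rw [hHeq]; exact _root_.isCyclic_zpowers _, ?_⟩
      intro a' hca'
      have ha1 : a' = 1 := by apply hpowinj; rw [← hca', hcardH2]; norm_num
      subst ha1
      exact ⟨by omega, Or.inr (Or.inr ⟨hHeq, le_refl 1⟩)⟩
    · -- the non-cyclic case
      refine Or.inr ⟨a, by omega, ha, g, hgval, ?_, ?_, ?_⟩
      · -- H = closure {-1, g}
        apply le_antisymm
        · intro h hh
          have hgmem : g ∈ Subgroup.closure {(-1 : (ZMod (2^n))ˣ), g} :=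
            Subgroup.subset_closure (Set.mem_insert_of_mem _ rfl)
          have hnegmem : (-1 : (ZMod (2^n))ˣ) ∈ Subgroup.closure {(-1 : (ZMod (2^n))ˣ), g} :=
            Subgroup.subset_closure (Set.mem_insert _ _)
          by_cases hker : h ∈ MonoidHom.ker f
          · have hhK : h ∈ K := Subgroup.mem_inf.mpr ⟨hh, hker⟩
            rw [hKeq] at hhK
            obtain ⟨k, hk⟩ := mem_zpowers_iff.mp hhK
            rw [← hk]
            exact Subgroup.zpow_mem _ hgmem k
          · have h1 : -h ∈ MonoidHom.ker f := hmemneg h hker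
            have h2 : -h ∈ H := by
              rw [show -h = -1 * h by rw [neg_one_mul]]
              exact mul_mem hneg1 hh
            have h3 : -h ∈ K := Subgroup.mem_inf.mpr ⟨h2, h1⟩
            rw [hKeq] at h3
            obtain ⟨k, hk⟩ := mem_zpowers_iff.mp h3
            have h4 : -h ∈ Subgroup.closure {(-1 : (ZMod (2^n))ˣ), g} := by
              rw [← hk]; exact Subgroup.zpow_mem _ hgmem k
            have h5 : h = -1 * -h := by simp
            rw [h5]
            exact mul_mem hnegmem h4
        · rw [Subgroup.closure_le]
          rintro x (rfl | hx)
          · exact hneg1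
          · rw [Set.mem_singleton_iff] at hx
            subst hx
            exact hgH
      · -- -1 ∉ zpowers g
        intro hmem
        exact hneg1ker ((zpowers_le.mpr hgker) hmem)
      · rw [hcardH, pow_succ']
  · -- -1 ∉ H
    by_cases hHU : H ≤ MonoidHom.ker f
    · -- Case B : H cyclic, H = zpowers g
      have hHK : H = K := (inf_eq_left.mpr hHU).symm
      have hHeq : H = zpowers g := by rw [hHK, hKeq]
      have hcardH : Nat.card H = 2^a := by rw [hHK]; exact hKcard
      refine Or.inl ⟨by rw [hHeq]; exact _root_.isCyclic_zpowers _, ?_⟩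
      intro a' hca'
      have ha1 : a' = a := by apply hpowinj; rw [← hca', hcardH]
      subst ha1
      exact ⟨ha, Or.inl ⟨g, hgval, hHeq⟩⟩
    · -- Case C : -1 ∉ H, H ⊄ ker f
      obtain ⟨h₀, hh₀H, hh₀k⟩ := SetLike.not_le_iff_exists.mp hHU
      set v := -h₀ with hvdef
      have hvker : v ∈ MonoidHom.ker f := hmemneg h₀ hh₀k
      have hv_notH : v ∉ H := by
        intro hv
        apply hneg1
        rw [show (-1 : (ZMod (2^n))ˣ) = v * h₀⁻¹ by rw [hvdef, neg_mul, mul_inv_cancel]]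
        exact mul_mem hv (inv_mem hh₀H)
      have hnegv : -v = h₀ := by rw [hvdef, neg_neg]
      have hv2K : v^2 ∈ K := by
        refine Subgroup.mem_inf.mpr ⟨?_, pow_mem hvker 2⟩
        rw [hvdef, neg_sq]
        exact pow_mem hh₀H 2
      have hane : a ≠ n - 2 := by
        intro haeq
        have hKker : K = MonoidHom.ker f :=
          Subgroup.eq_of_le_of_card_ge hKle (by rw [hcardker, hKcard, haeq])
        apply hv_notH
        have : v ∈ K := by rw [hKker]; exact hvker
        exact (inf_le_left : K ≤ H) this
      -- the order-2 unit z = 1 + 2^(n-1)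
      obtain ⟨z, hzv, hzo⟩ := exists_unit hn (k := n-1) (by omega) 1 odd_one
      have hzo' : orderOf z = 2 := by rw [hzo, show n - (n-1) = 1 by omega, pow_one]
      have hzker : z ∈ MonoidHom.ker f := by
        apply hintker z _ hzv
        push_cast
        rw [mod4_pow (by omega)]
        ring
      by_cases ha0 : a = 0
      · -- H = {1, -z},  -z has value -1 + 2^(n-1)
        subst ha0
        have hKbot : K = ⊥ := Subgroup.card_eq_one.mp (by rw [hKcard, pow_zero])
        have hv2 : v^2 = 1 := by
          have := hv2K
          rw [hKbot, Subgroup.mem_bot] at this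
          exact this
        have hv1 : v ≠ 1 := fun h => hv_notH (h ▸ one_mem H)
        have hvo : orderOf v = 2 := orderOf_eq_prime hv2 hv1
        have hvz : zpowers v = zpowers z :=
          guniq (zpowers v) (zpowers_le.mpr hvker) 1 (by omega)
            (by rw [Nat.card_zpowers, hvo, pow_one]) z hzker hzo'
        have hveq : v = z := by
          have hmem : v ∈ zpowers z := by rw [← hvz]; exact mem_zpowers v
          exact (mem_order_two z v hzo' hmem).resolve_left hv1
        have hh₀1 : h₀ ≠ 1 := fun h => hh₀k (h ▸ one_mem (MonoidHom.ker f))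
        have hh₀2 : h₀^2 = 1 := by rw [← hnegv, neg_sq, hv2]
        have hh₀o : orderOf h₀ = 2 := orderOf_eq_prime hh₀2 hh₀1
        have hcardH2 : Nat.card H = 2 := by
          rw [hdouble h₀ hh₀H hh₀k, hKcard]; norm_num
        have hHeq : H = zpowers h₀ :=
          (Subgroup.eq_of_le_of_card_ge (zpowers_le.mpr hh₀H)
            (by rw [Nat.card_zpowers, hh₀o, hcardH2])).symm
        have hh₀val : (h₀ : ZMod (2^n)) = -1 + 2^(n-1) := by
          have h2n : ((2:ZMod (2^n)))^n = 0 := two_pow_zero (le_refl n)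
          have hs : (2:ZMod (2^n))^(n-1) + 2^(n-1) = 0 := by
            rw [← two_mul, ← pow_succ', show n - 1 + 1 = n by omega, h2n]
          rw [← hnegv, hveq, Units.val_neg, hzv]
          push_cast
          linear_combination -hs
        refine Or.inl ⟨by rw [hHeq]; exact _root_.isCyclic_zpowers _, ?_⟩
        intro a' hca'
        have ha1 : a' = 1 := by apply hpowinj; rw [← hca', hcardH2]; norm_num
        subst ha1
        exact ⟨by omega, Or.inr (Or.inl ⟨h₀, hh₀val, hHeq⟩)⟩
      · -- a ≥ 1 : H = zpowers (-u) with u = 1 - 2^(n-(a+1))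
        have hzK : z ∈ K := by
          set y := g ^ (2^(a-1) : ℕ) with hy
          have hyo : orderOf y = 2 := by
            rw [hy, orderOf_pow, hgo', Nat.gcd_eq_right (pow_dvd_pow 2 (by omega)),
              Nat.pow_div (by omega) (by norm_num), show a - (a-1) = 1 by omega, pow_one]
          have hyker : y ∈ MonoidHom.ker f := pow_mem hgker _
          have hyz : zpowers y = zpowers z :=
            guniq (zpowers y) (zpowers_le.mpr hyker) 1 (by omega)
              (by rw [Nat.card_zpowers, hyo, pow_one]) z hzker hzo'
          have hzy : z ∈ zpowers y := by rw [hyz]; exact mem_zpowers z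
          rw [hKeq]
          exact (zpowers_le.mpr (pow_mem (mem_zpowers g) _)) hzy
        have hv2K' : v^2 ∈ zpowers g := hKeq ▸ hv2K
        obtain ⟨m, hm⟩ := mem_powers_iff_mem_zpowers.mpr hv2K'
        have hm : g ^ m = v ^ 2 := hm
        rcases Nat.even_or_odd m with ⟨r, hr⟩ | hodd
        · -- m even : contradiction
          exfalso
          set k₁ := g^r with hk₁
          have hk₁K : k₁ ∈ K := by rw [hKeq]; exact pow_mem (mem_zpowers g) r
          have hk₁H : k₁ ∈ H := (inf_le_left : K ≤ H) hk₁K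
          have hk2 : k₁^2 = v^2 := by
            rw [hk₁, ← pow_mul, show r*2 = m by omega, hm]
          have hx2 : (v * k₁⁻¹)^2 = 1 := by
            rw [mul_pow, inv_pow, hk2, mul_inv_cancel]
          by_cases hx1 : v * k₁⁻¹ = 1
          · exact hv_notH (mul_inv_eq_one.mp hx1 ▸ hk₁H)
          · have hxker : v * k₁⁻¹ ∈ MonoidHom.ker f :=
              mul_mem hvker (inv_mem (hKle hk₁K))
            have hxo : orderOf (v * k₁⁻¹) = 2 := orderOf_eq_prime hx2 hx1
            have hxz : zpowers (v * k₁⁻¹) = zpowers z :=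
              guniq _ (zpowers_le.mpr hxker) 1 (by omega)
                (by rw [Nat.card_zpowers, hxo, pow_one]) z hzker hzo'
            have hxmem : v * k₁⁻¹ ∈ zpowers z := by rw [← hxz]; exact mem_zpowers _
            have hxeq : v * k₁⁻¹ = z := (mem_order_two z _ hzo' hxmem).resolve_left hx1
            have hveq : v = z * k₁ := by rw [← hxeq, inv_mul_cancel_right]
            exact hv_notH (hveq ▸ mul_mem ((inf_le_left : K ≤ H) hzK) hk₁H)
        · -- m odd : H is cyclic generated by -u
          have hov2 : orderOf (v^2) = 2^a := by
            rw [← hm, orderOf_pow, hgo',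
              Nat.Coprime.gcd_eq_one (Nat.Coprime.pow_left a (Nat.coprime_two_left.mpr hodd)),
              Nat.div_one]
          have hov : orderOf v = 2^(a+1) := by
            obtain ⟨e, he, hoe⟩ := (Nat.dvd_prime_pow Nat.prime_two).mp
              (hcardG ▸ orderOf_dvd_natCard v)
            have he1 : e ≠ 0 := by
              intro h0
              rw [h0, pow_zero, orderOf_eq_one_iff] at hoe
              exact hv_notH (hoe ▸ one_mem H)
            have h2 : orderOf (v^2) = 2^(e-1) := by
              rw [orderOf_pow, hoe, Nat.gcd_eq_right (dvd_pow_self 2 he1),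
                show (2:ℕ)^e = 2^(e-1) * 2 by rw [← pow_succ]; congr 1; omega,
                Nat.mul_div_cancel _ (by norm_num)]
            rw [hov2] at h2
            have : e - 1 = a := hpowinj h2.symm
            rw [hoe]; congr 1; omega
          obtain ⟨u, huv, huo⟩ := exists_unit hn (k := n-(a+1)) (by omega) (-1) ⟨-1, by ring⟩
          have huo' : orderOf u = 2^(a+1) := by
            rw [huo]; congr 1; omega
          have huker : u ∈ MonoidHom.ker f := by
            apply hintker u _ huv
            push_cast
            rw [mod4_pow (by omega)]
            ring
          have hvu : zpowers v = zpowers u :=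
            guniq (zpowers v) (zpowers_le.mpr hvker) (a+1) (by omega)
              (by rw [Nat.card_zpowers, hov]) u huker huo'
          have humem : u ∈ zpowers v := by rw [hvu]; exact mem_zpowers u
          obtain ⟨m', hm'⟩ := mem_powers_iff_mem_zpowers.mpr humem
          have hm' : v ^ m' = u := hm'
          have hm'odd : Odd m' := by
            by_contra hcon
            rw [Nat.not_odd_iff_even] at hcon
            obtain ⟨r', hr'⟩ := hcon
            have hu2a : u ^ (2^a) = 1 := by
              rw [← hm', ← pow_mul, show m' * 2^a = 2^(a+1) * r' by rw [hr']; ring,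
                pow_mul, ← hov, pow_orderOf_eq_one, one_pow]
            have hdvd : (2:ℕ)^(a+1) ∣ 2^a := huo' ▸ orderOf_dvd_of_pow_eq_one hu2a
            have := Nat.le_of_dvd (by positivity) hdvd
            have h2lt : (2:ℕ)^a < 2^(a+1) := Nat.pow_lt_pow_succ (by norm_num)
            omega
          have hwH : -u ∈ H := by
            rw [← hm', ← Odd.neg_pow hm'odd, hnegv]
            exact pow_mem hh₀H m'
          have hua : u ^ (2^a) ≠ 1 := by
            intro hcon
            have hdvd : (2:ℕ)^(a+1) ∣ 2^a := huo' ▸ orderOf_dvd_of_pow_eq_one hcon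
            have := Nat.le_of_dvd (by positivity) hdvd
            have h2lt : (2:ℕ)^a < 2^(a+1) := Nat.pow_lt_pow_succ (by norm_num)
            omega
          have hwo : orderOf (-u) = 2^(a+1) := by
            apply orderOf_eq_prime_pow
            · rw [Even.neg_pow (by exact (Nat.even_pow.mpr ⟨even_two, by omega⟩))]
              exact hua
            · rw [Even.neg_pow (by exact (Nat.even_pow.mpr ⟨even_two, by omega⟩))]
              rw [← huo', pow_orderOf_eq_one]
          have hcardH : Nat.card H = 2^(a+1) := by
            rw [hdouble h₀ hh₀H hh₀k, hKcard, pow_succ']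
          have hHeq : H = zpowers (-u) :=
            (Subgroup.eq_of_le_of_card_ge (zpowers_le.mpr hwH)
              (by rw [Nat.card_zpowers, hwo, hcardH])).symm
          have hwval : ((-u : (ZMod (2^n))ˣ) : ZMod (2^n)) = -1 + 2^(n-(a+1)) := by
            rw [Units.val_neg, huv]
            push_cast
            ring
          refine Or.inl ⟨by rw [hHeq]; exact _root_.isCyclic_zpowers _, ?_⟩
          intro a' hca'
          have ha1 : a' = a + 1 := by apply hpowinj; rw [← hca', hcardH]
          subst ha1
          exact ⟨by omega, Or.inr (Or.inl ⟨-u, hwval, hHeq⟩)⟩
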